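/- Let W be a left separating point of M. If δ : A → M is linear and satisfies δ(W) = Aδ(B)* + δ(A)B* whenever AB* = W, then δ(I) = 0 and δ(W*) = δ(W)*. -/
import Mathlib


open MulOpposite

/-- If `W` is a left separating point of the unital `*`-bimodule `M` and `δ` satisfies
`δ(W) = A δ(B)* + δ(A) B*` whenever `A B* = W`, then `δ(I) = 0` and `δ(W*) = δ(W)*`. -/
theorem stmt1 {A : Type*} {M : Type*}
    [NormedRing A] [NormedAlgebra ℂ A] [CompleteSpace A] [StarRing A]
    [AddCommGroup M] [Module ℂ M] [Module A M] [Module Aᵐᵒᵖ M]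
    [SMulCommClass A Aᵐᵒᵖ M] [IsScalarTower ℂ A M] [IsScalarTower ℂ Aᵐᵒᵖ M]
    [StarAddMonoid M]
    (hstar_left : ∀ (a : A) (m : M), star (a • m) = op (star a) • star m)
    (hstar_right : ∀ (a : A) (m : M), star (op a • m) = star a • star m)
    (W : A) (hW : ∀ m : M, W • m = 0 → m = 0)
    (δ : A →ₗ[ℂ] M)
    (hδ : ∀ a b : A, a * star b = W → δ W = a • star (δ b) + op (star b) • δ a) :
    δ 1 = 0 ∧ δ (star W) = star (δ W) := by
  have h1 : δ 1 = 0 := by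
    have h := hδ W 1 (by simp)
    have h0 : W • star (δ 1) = 0 := by
      have : op (star (1 : A)) • δ W = δ W := by simp
      rw [this] at h
      have := h.symm
      linear_combination (norm := abel1) h.symm
    have := hW _ h0
    have : star (star (δ 1)) = star (0 : M) := by rw [this]
    simpa using this
  refine ⟨h1, ?_⟩
  have h := hδ 1 (star W) (by simp)
  rw [h1] at h
  simp only [smul_zero, add_zero, one_smul] at h
  rw [h, star_star]
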